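/- (Monad associativity.) Let X, Y, Z be countable sets, g : X → C(Y), f : Y → C(Z). Then for every S ∈ C(X), (f† ∘ g)†(S) = f†(g†(S)), i.e., the Kleisli extension of the composite x ↦ f†(g(x)) applied to S equals the composition of the Kleisli extensions applied to S. -/
import Mathlib


open scoped Classical
open Filter Topology

namespace DOL

/-- A discrete probability distribution on `X`: pointwise nonnegative with total mass 1. -/
def IsDist {X : Type*} (μ : X → ℝ) : Prop := (∀ x, 0 ≤ μ x) ∧ HasSum μ 1

/-- The point-mass (Dirac) distribution at `x`. -/
noncomputable def dirac {X : Type*} (x : X) : X → ℝ := fun y => if y = x then 1 else 0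

/-- The order `⊑_D` on distributions over `X_⊥ = Option X` (with `⊥ = none`):
pointwise comparison at proper states only. -/
def dle {X : Type*} (μ ν : Option X → ℝ) : Prop := ∀ x : X, μ (some x) ≤ ν (some x)

/-- Up-closure of a set of distributions over `X_⊥` (within `D(X_⊥)`). -/
def upClo {X : Type*} (S : Set (Option X → ℝ)) : Set (Option X → ℝ) :=
  {ν | IsDist ν ∧ ∃ μ ∈ S, dle μ ν}

/-- Convexity of a set of functions, with pointwise convex combinations. -/
def IsConvexSet {X : Type*} (S : Set (X → ℝ)) : Prop :=
  ∀ μ ∈ S, ∀ ν ∈ S, ∀ p : ℝ, 0 ≤ p → p ≤ 1 →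
    (fun x => p * μ x + (1 - p) * ν x) ∈ S

/-- Membership in `C(X)`: nonempty, consisting of distributions over `X_⊥`,
convex, (topologically) closed, and up-closed. -/
def memC {X : Type*} (S : Set (Option X → ℝ)) : Prop :=
  S.Nonempty ∧ (∀ μ ∈ S, IsDist μ) ∧ IsConvexSet S ∧ IsClosed S ∧ upClo S = S

/-- Bottom-lifting of a set-valued map: `f_⊥(⊥) = ↑{δ_⊥}`. -/
noncomputable def fbot {X Y : Type*} (f : X → Set (Option Y → ℝ)) :
    Option X → Set (Option Y → ℝ) :=
  fun x => match x with
  | some x => f x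
  | none => upClo {dirac (none : Option Y)}

/-- Kleisli extension: all convex mixtures `∑_{x ∈ supp μ} μ(x)·ν_x` with `μ ∈ S`
and `ν_x ∈ f_⊥(x)` on the support of `μ`. -/
noncomputable def kleisli {X Y : Type*} (f : X → Set (Option Y → ℝ))
    (S : Set (Option X → ℝ)) : Set (Option Y → ℝ) :=
  {ξ | ∃ μ ∈ S, ∃ ν : Option X → (Option Y → ℝ),
    (∀ x, 0 < μ x → ν x ∈ fbot f x) ∧ (∀ y, ξ y = ∑' x, μ x * ν x y)}

/-- Probabilistic choice between sets of distributions. -/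
def pchoice {X : Type*} (p : ℝ) (S T : Set (Option X → ℝ)) : Set (Option X → ℝ) :=
  {ξ | ∃ μ ∈ S, ∃ ν ∈ T, ξ = fun x => p * μ x + (1 - p) * ν x}

/-- The monad unit `η(x) = ↑{δ_x}`. -/
noncomputable def eta {X : Type*} (x : X) : Set (Option X → ℝ) := upClo {dirac (some x)}

/-- The loop characteristic functional. -/
noncomputable def Phi {St : Type*} (c : St → Set (Option St → ℝ)) (b : St → Bool)
    (f : St → Set (Option St → ℝ)) : St → Set (Option St → ℝ) :=
  fun σ => if b σ then kleisli f (c σ) else upClo {dirac (some σ)}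


-- ===== auxiliary lemmas for kleisli_assoc =====

lemma isDist_dirac' {X : Type*} (x : X) : IsDist (dirac x) :=
  ⟨fun y => by unfold dirac; split <;> norm_num, hasSum_ite_eq x 1⟩

lemma dist_le_one {X : Type*} {μ : X → ℝ} (h : IsDist μ) (x : X) : μ x ≤ 1 :=
  le_hasSum h.2 x (fun y _ => h.1 y)

lemma upClo_dirac_none {Y : Type*} :
    upClo {dirac (none : Option Y)} = {ν | IsDist ν} := by
  ext ν
  constructor
  · exact fun h => h.1
  · intro h
    refine ⟨h, dirac none, rfl, fun y => ?_⟩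
    simp only [dirac, if_neg (Option.some_ne_none y)]
    exact h.1 _

lemma mem_fbot_isDist {X Y : Type*} {f : X → Set (Option Y → ℝ)} (hf : ∀ x, memC (f x))
    {x : Option X} {ρ : Option Y → ℝ} (h : ρ ∈ fbot f x) : IsDist ρ := by
  cases x with
  | none => rw [fbot, upClo_dirac_none] at h; exact h
  | some x => exact (hf x).2.1 ρ h

lemma fbot_nonempty {X Y : Type*} {f : X → Set (Option Y → ℝ)} (hf : ∀ x, memC (f x))
    (x : Option X) : ∃ q, q ∈ fbot f x := by
  cases x with
  | none => exact ⟨dirac none, by rw [fbot, upClo_dirac_none]; exact isDist_dirac' _⟩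
  | some x => exact (hf x).1

lemma summable_mul_dist {ι : Type*} {w : ι → ℝ} (hw : Summable w) (hw0 : ∀ i, 0 ≤ w i)
    {c : ι → ℝ} (h0 : ∀ i, 0 ≤ c i) (h1 : ∀ i, c i ≤ 1) : Summable fun i => w i * c i :=
  Summable.of_nonneg_of_le (fun i => mul_nonneg (hw0 i) (h0 i))
    (fun i => mul_le_of_le_one_right (hw0 i) (h1 i)) hw

lemma fub {ι κ : Type*} (a : ι → κ → ℝ) (h0 : ∀ i j, 0 ≤ a i j)
    (hrow : ∀ i, Summable (a i)) (hcol : Summable fun i => ∑' j, a i j) :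
    Summable (Function.uncurry a) ∧ (∀ j, Summable fun i => a i j) ∧
      Summable (fun j => ∑' i, a i j) ∧ (∑' j, ∑' i, a i j) = ∑' i, ∑' j, a i j := by
  have hF : Summable (Function.uncurry a) :=
    (summable_prod_of_nonneg (fun p => h0 p.1 p.2)).2 ⟨hrow, hcol⟩
  have hswap : Summable (fun p : κ × ι => a p.2 p.1) := hF.prod_symm
  have hcols : ∀ j, Summable fun i => a i j := fun j => hswap.prod_factor j
  have hsum2 : Summable fun j => ∑' i, a i j :=
    ((summable_prod_of_nonneg (fun p : κ × ι => h0 p.2 p.1)).1 hswap).2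
  exact ⟨hF, hcols, hsum2, Summable.tsum_comm hF⟩

lemma mixture_isDist {ι κ : Type*} {w : ι → ℝ} (hw0 : ∀ i, 0 ≤ w i) (hw : HasSum w 1)
    {p : ι → κ → ℝ} (hp : ∀ i, IsDist (p i)) : IsDist (fun z => ∑' i, w i * p i z) := by
  have hrow : ∀ i, Summable fun z => w i * p i z := fun i => ((hp i).2.summable).mul_left _
  have hrowt : ∀ i, (∑' z, w i * p i z) = w i := by
    intro i
    rw [tsum_mul_left, (hp i).2.tsum_eq, mul_one]
  have hcol : Summable fun i => ∑' z, w i * p i z := by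
    apply Summable.congr hw.summable
    intro i; exact (hrowt i).symm
  obtain ⟨_, hcols, hsum2, heq⟩ := fub (fun i z => w i * p i z)
    (fun i z => mul_nonneg (hw0 i) ((hp i).1 z)) hrow hcol
  constructor
  · exact fun z => tsum_nonneg (fun i => mul_nonneg (hw0 i) ((hp i).1 z))
  · have h1 : (∑' z, ∑' i, w i * p i z) = 1 := by
      rw [heq]
      calc (∑' i, ∑' z, w i * p i z) = ∑' i, w i := tsum_congr hrowt
        _ = 1 := hw.tsum_eq
    exact h1 ▸ hsum2.hasSum

lemma isConvexSet_convex {κ : Type*} {C : Set (κ → ℝ)} (h : IsConvexSet C) : Convex ℝ C := by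
  intro μ hμ ν hν a b ha hb hab
  have hb' : b = 1 - a := by linarith
  have h2 := h μ hμ ν hν a ha (by linarith)
  convert h2 using 1
  funext z
  simp [hb', smul_eq_mul]

lemma mixture_mem {κ ι : Type*} {C : Set (κ → ℝ)} (hne : C.Nonempty)
    (hCd : ∀ μ ∈ C, IsDist μ) (hconv : IsConvexSet C) (hclosed : IsClosed C)
    {w : ι → ℝ} (hw0 : ∀ i, 0 ≤ w i) (hw : HasSum w 1)
    {p : ι → κ → ℝ} (hp : ∀ i, p i ∈ C) :
    (fun z => ∑' i, w i * p i z) ∈ C := by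
  obtain ⟨q, hq⟩ := hne
  have hconv' : Convex ℝ C := isConvexSet_convex hconv
  have hsum : ∀ z, Summable fun i => w i * p i z := fun z =>
    summable_mul_dist hw.summable hw0 (fun i => (hCd _ (hp i)).1 z)
      (fun i => dist_le_one (hCd _ (hp i)) z)
  have hPF : ∀ F : Finset ι,
      (fun z => (∑ i ∈ F, w i * p i z) + (1 - ∑ i ∈ F, w i) * q z) ∈ C := by
    intro F
    classical
    set t : Finset (Option ι) := insert none (F.map Function.Embedding.some) with ht
    have hnone : (none : Option ι) ∉ F.map Function.Embedding.some := by simp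
    have hsle : ∑ i ∈ F, w i ≤ 1 := sum_le_hasSum F (fun i _ => hw0 i) hw
    set W : Option ι → ℝ := fun j => j.elim (1 - ∑ i ∈ F, w i) w with hW
    set P : Option ι → κ → ℝ := fun j => j.elim q p with hP
    have hWsum : ∑ j ∈ t, W j = 1 := by
      rw [ht, Finset.sum_insert hnone, Finset.sum_map]
      simp [hW]
    have hmem : ∑ j ∈ t, W j • P j ∈ C := by
      apply hconv'.sum_mem
      · intro j hj
        rcases j with _ | i
        · simpa [hW] using hsle
        · exact hw0 i
      · exact hWsum
      · intro j hj
        rcases j with _ | i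
        · exact hq
        · exact hp i
    convert hmem using 1
    funext z
    rw [ht, Finset.sum_insert hnone, Finset.sum_map]
    simp only [Finset.sum_apply, Pi.add_apply, Pi.smul_apply, smul_eq_mul]
    simp only [hW, hP, Option.elim, Function.Embedding.some_apply]
    ring
  have htend : Tendsto (fun F : Finset ι =>
      (fun z => (∑ i ∈ F, w i * p i z) + (1 - ∑ i ∈ F, w i) * q z))
      atTop (𝓝 (fun z => ∑' i, w i * p i z)) := by
    rw [tendsto_pi_nhds]
    intro z
    have h1 : Tendsto (fun F : Finset ι => ∑ i ∈ F, w i * p i z) atTop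
        (𝓝 (∑' i, w i * p i z)) := (hsum z).hasSum
    have h2 : Tendsto (fun F : Finset ι => (1 - ∑ i ∈ F, w i) * q z) atTop (𝓝 0) := by
      have hws : Tendsto (fun F : Finset ι => ∑ i ∈ F, w i) atTop (𝓝 1) := hw
      have h3 : Tendsto (fun F : Finset ι => (1 : ℝ) - ∑ i ∈ F, w i) atTop (𝓝 (1 - 1)) :=
        tendsto_const_nhds.sub hws
      have h4 := h3.mul (tendsto_const_nhds : Tendsto (fun _ : Finset ι => q z) atTop (𝓝 (q z)))
      simpa using h4
    simpa using h1.add h2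
  exact hclosed.mem_of_tendsto htend (Filter.Eventually.of_forall hPF)

lemma swap_sum {ιX ιY : Type*} {μ : ιX → ℝ} (hμ0 : ∀ x, 0 ≤ μ x) (hμs : Summable μ)
    {σ : ιX → ιY → ℝ} (hσ : ∀ x, IsDist (σ x))
    {c : ιX → ιY → ℝ} (hc0 : ∀ x y, 0 ≤ c x y) (hc1 : ∀ x y, c x y ≤ 1) :
    ∑' x, μ x * ∑' y, σ x y * c x y = ∑' y, ∑' x, μ x * σ x y * c x y := by
  set a : ιX → ιY → ℝ := fun x y => μ x * (σ x y * c x y) with ha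
  have h0 : ∀ x y, 0 ≤ a x y := fun x y =>
    mul_nonneg (hμ0 x) (mul_nonneg ((hσ x).1 y) (hc0 x y))
  have hrowin : ∀ x, Summable fun y => σ x y * c x y := fun x =>
    summable_mul_dist (hσ x).2.summable (hσ x).1 (hc0 x) (hc1 x)
  have hrow : ∀ x, Summable (a x) := fun x => (hrowin x).mul_left (μ x)
  have hin1 : ∀ x, (∑' y, σ x y * c x y) ≤ 1 := by
    intro x
    calc (∑' y, σ x y * c x y) ≤ ∑' y, σ x y :=
          Summable.tsum_le_tsum (fun y => mul_le_of_le_one_right ((hσ x).1 y) (hc1 x y))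
            (hrowin x) (hσ x).2.summable
      _ = 1 := (hσ x).2.tsum_eq
  have hin0 : ∀ x, 0 ≤ ∑' y, σ x y * c x y := fun x =>
    tsum_nonneg (fun y => mul_nonneg ((hσ x).1 y) (hc0 x y))
  have hcol : Summable fun x => ∑' y, a x y := by
    apply Summable.congr (summable_mul_dist hμs hμ0 hin0 hin1)
    intro x
    rw [ha]
    exact (tsum_mul_left).symm
  obtain ⟨_, _, _, heq⟩ := fub a h0 hrow hcol
  calc ∑' x, μ x * ∑' y, σ x y * c x y = ∑' x, ∑' y, a x y := by
        refine tsum_congr fun x => ?_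
        rw [ha]
        exact (tsum_mul_left).symm
    _ = ∑' y, ∑' x, a x y := heq.symm
    _ = ∑' y, ∑' x, μ x * σ x y * c x y := by
        refine tsum_congr fun y => tsum_congr fun x => ?_
        rw [ha, mul_assoc]


/-- monad associativity: `(f† ∘ g)†(S) = f†(g†(S))`. -/
theorem kleisli_assoc {X Y Z : Type*} [Countable X] [Countable Y] [Countable Z]
    (g : X → Set (Option Y → ℝ)) (hg : ∀ x, memC (g x))
    (f : Y → Set (Option Z → ℝ)) (hf : ∀ y, memC (f y))
    (S : Set (Option X → ℝ)) (hS : memC S) :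
    kleisli (fun x : X => kleisli f (g x)) S = kleisli f (kleisli g S) := by
  classical
  choose q hq using fbot_nonempty hf
  have hqd : ∀ y, IsDist (q y) := fun y => mem_fbot_isDist hf (hq y)
  ext ξ
  constructor
  · -- ⊆ direction
    rintro ⟨μ, hμS, ν, hν, hξ⟩
    have hμd : IsDist μ := hS.2.1 μ hμS
    have hdec : ∀ x : Option X, ∃ σ : Option Y → ℝ, ∃ τ : Option Y → Option Z → ℝ,
        IsDist σ ∧ (∀ y, IsDist (τ y)) ∧
        (0 < μ x → σ ∈ fbot g x ∧ (∀ y, 0 < σ y → τ y ∈ fbot f y) ∧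
          ∀ z, ν x z = ∑' y, σ y * τ y z) := by
      intro x
      by_cases hx : 0 < μ x
      · have hmem := hν x hx
        have hrep : ∃ σ ∈ fbot g x, ∃ τ0 : Option Y → Option Z → ℝ,
            (∀ y, 0 < σ y → τ0 y ∈ fbot f y) ∧ ∀ z, ν x z = ∑' y, σ y * τ0 y z := by
          cases x with
          | some x0 =>
            obtain ⟨σ, hσ, τ0, hτ0, hrep⟩ := hmem
            exact ⟨σ, hσ, τ0, hτ0, fun z => hrep z⟩
          | none =>
            have hdist : IsDist (ν none) := by
              have h1 : ν none ∈ upClo {dirac (none : Option Z)} := hmem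
              rwa [upClo_dirac_none] at h1
            refine ⟨dirac none, ?_, fun _ => ν none, ?_, ?_⟩
            · show dirac none ∈ upClo {dirac (none : Option Y)}
              rw [upClo_dirac_none]
              exact isDist_dirac' _
            · intro y hy
              have hyn : y = none := by
                by_contra hne
                simp [dirac, hne] at hy
              subst hyn
              show ν none ∈ upClo {dirac (none : Option Z)}
              rw [upClo_dirac_none]
              exact hdist
            · intro z
              rw [tsum_eq_single (none : Option Y)
                (by intro y hy; simp [dirac, hy])]
              simp [dirac]
        obtain ⟨σ, hσ, τ0, hτ0, hrep⟩ := hrep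
        refine ⟨σ, fun y => if 0 < σ y then τ0 y else dirac none,
          mem_fbot_isDist hg hσ, ?_, fun _ => ⟨hσ, ?_, ?_⟩⟩
        · intro y
          by_cases hy : 0 < σ y
          · simpa [hy] using mem_fbot_isDist hf (hτ0 y hy)
          · simpa [hy] using isDist_dirac' (none : Option Z)
        · intro y hy
          simpa [hy] using hτ0 y hy
        · intro z
          rw [hrep z]
          refine tsum_congr fun y => ?_
          by_cases hy : 0 < σ y
          · simp [hy]
          · have h0 : σ y = 0 := le_antisymm (not_lt.1 hy) ((mem_fbot_isDist hg hσ).1 y)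
            simp [h0]
      · exact ⟨dirac none, fun _ => dirac none, isDist_dirac' _,
          fun _ => isDist_dirac' _, fun h => absurd h hx⟩
    choose σ τ hσd hτd hmain using hdec
    set μ' : Option Y → ℝ := fun y => ∑' x, μ x * σ x y with hμ'
    have hμ'0 : ∀ y, 0 ≤ μ' y := fun y =>
      tsum_nonneg fun x => mul_nonneg (hμd.1 x) ((hσd x).1 y)
    have hμ'mem : μ' ∈ kleisli g S :=
      ⟨μ, hμS, σ, fun x hx => (hmain x hx).1, fun y => rfl⟩
    have hsumxy : ∀ y, Summable fun x => μ x * σ x y := fun y =>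
      summable_mul_dist hμd.2.summable hμd.1 (fun x => (hσd x).1 y)
        (fun x => dist_le_one (hσd x) y)
    have hhs : ∀ y, HasSum (fun x => μ x * σ x y) (μ' y) := fun y => (hsumxy y).hasSum
    set pf : Option Y → Option X → Option Z → ℝ :=
      fun y x => if 0 < μ x * σ x y then τ x y else q y with hpf
    have hpfd : ∀ y x, IsDist (pf y x) := by
      intro y x
      by_cases hx : 0 < μ x * σ x y
      · simpa [hpf, hx] using hτd x y
      · simpa [hpf, hx] using hqd y
    have hpfm : ∀ y x, pf y x ∈ fbot f y := by
      intro y x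
      by_cases hx : 0 < μ x * σ x y
      · have hμx : 0 < μ x := by
          rcases (hμd.1 x).lt_or_eq with h | h
          · exact h
          · exfalso; rw [← h] at hx; simp at hx
        have hσxy : 0 < σ x y := by
          rcases ((hσd x).1 y).lt_or_eq with h | h
          · exact h
          · exfalso; rw [← h] at hx; simp at hx
        simpa [hpf, hx] using (hmain x hμx).2.1 y hσxy
      · simpa [hpf, hx] using hq y
    set τ' : Option Y → Option Z → ℝ :=
      fun y z => ∑' x, (μ x * σ x y / μ' y) * pf y x z with hτ'
    have hτ'mem : ∀ y, 0 < μ' y → τ' y ∈ fbot f y := by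
      intro y hy
      have hv0 : ∀ x, 0 ≤ μ x * σ x y / μ' y := fun x =>
        div_nonneg (mul_nonneg (hμd.1 x) ((hσd x).1 y)) hy.le
      have hvs : HasSum (fun x => μ x * σ x y / μ' y) 1 := by
        have h1 := (hhs y).div_const (μ' y)
        rwa [div_self hy.ne'] at h1
      cases y with
      | some y0 =>
        have hC := hf y0
        exact mixture_mem hC.1 hC.2.1 hC.2.2.1 hC.2.2.2.1 hv0 hvs
          (fun x => (hpfm (some y0) x : pf (some y0) x ∈ f y0))
      | none =>
        show τ' none ∈ upClo {dirac (none : Option Z)}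
        rw [upClo_dirac_none]
        exact mixture_isDist hv0 hvs (fun x => hpfd _ x)
    have hkey : ∀ y z, μ' y * τ' y z = ∑' x, μ x * σ x y * τ x y z := by
      intro y z
      rcases (hμ'0 y).lt_or_eq with hy | hy
      · rw [hτ', ← tsum_mul_left]
        refine tsum_congr fun x => ?_
        by_cases hx : 0 < μ x * σ x y
        · rw [hpf]
          simp only [if_pos hx]
          field_simp
        · have h0 : μ x * σ x y = 0 :=
            le_antisymm (not_lt.1 hx) (mul_nonneg (hμd.1 x) ((hσd x).1 y))
          rw [h0]
          simp
      · have hterm : ∀ x, μ x * σ x y = 0 := by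
          intro x
          have hle := Summable.le_tsum (hsumxy y) x
            (fun x' _ => mul_nonneg (hμd.1 x') ((hσd x').1 y))
          exact le_antisymm (hy ▸ hle) (mul_nonneg (hμd.1 x) ((hσd x).1 y))
        rw [← hy, zero_mul]
        symm
        calc (∑' x, μ x * σ x y * τ x y z) = ∑' _x : Option X, (0:ℝ) := by
              refine tsum_congr fun x => ?_
              rw [hterm x, zero_mul]
          _ = 0 := tsum_zero
    refine ⟨μ', hμ'mem, τ', hτ'mem, fun z => ?_⟩
    rw [hξ z]
    have hswap := swap_sum (σ := σ) (c := fun x y => τ x y z) hμd.1 hμd.2.summable hσd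
      (fun x y => (hτd x y).1 z) (fun x y => dist_le_one (hτd x y) z)
    calc ∑' x, μ x * ν x z = ∑' x, μ x * ∑' y, σ x y * τ x y z := by
          refine tsum_congr fun x => ?_
          rcases (hμd.1 x).lt_or_eq with hx | hx
          · rw [(hmain x hx).2.2 z]
          · rw [← hx, zero_mul, zero_mul]
      _ = ∑' y, ∑' x, μ x * σ x y * τ x y z := hswap
      _ = ∑' y, μ' y * τ' y z := tsum_congr fun y => (hkey y z).symm
  · -- ⊇ direction
    rintro ⟨μ', hμ'mem, τ, hτ, hξ⟩
    obtain ⟨μ, hμS, σ0, hσ0, hμ'def⟩ := hμ'mem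
    have hμd : IsDist μ := hS.2.1 μ hμS
    set σ : Option X → Option Y → ℝ :=
      fun x => if 0 < μ x then σ0 x else dirac none with hσdef
    have hσd : ∀ x, IsDist (σ x) := by
      intro x
      by_cases hx : 0 < μ x
      · simpa [hσdef, hx] using mem_fbot_isDist hg (hσ0 x hx)
      · simpa [hσdef, hx] using isDist_dirac' (none : Option Y)
    have hσmem : ∀ x, 0 < μ x → σ x ∈ fbot g x := by
      intro x hx
      simpa [hσdef, hx] using hσ0 x hx
    have hμ'eq : ∀ y, μ' y = ∑' x, μ x * σ x y := by
      intro y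
      rw [hμ'def y]
      refine tsum_congr fun x => ?_
      by_cases hx : 0 < μ x
      · simp [hσdef, hx]
      · have h0 : μ x = 0 := le_antisymm (not_lt.1 hx) (hμd.1 x)
        simp [h0]
    have hμ'0 : ∀ y, 0 ≤ μ' y := fun y => by
      rw [hμ'eq y]
      exact tsum_nonneg fun x => mul_nonneg (hμd.1 x) ((hσd x).1 y)
    set τ2 : Option Y → Option Z → ℝ := fun y => if 0 < μ' y then τ y else q y with hτ2
    have hτ2mem : ∀ y, τ2 y ∈ fbot f y := by
      intro y
      by_cases hy : 0 < μ' y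
      · simpa [hτ2, hy] using hτ y hy
      · simpa [hτ2, hy] using hq y
    have hτ2d : ∀ y, IsDist (τ2 y) := fun y => mem_fbot_isDist hf (hτ2mem y)
    refine ⟨μ, hμS, fun x z => ∑' y, σ x y * τ2 y z, ?_, fun z => ?_⟩
    · intro x hx
      cases x with
      | some x0 =>
        show (fun z => ∑' y, σ (some x0) y * τ2 y z) ∈ kleisli f (g x0)
        exact ⟨σ (some x0), hσmem (some x0) hx, τ2, fun y _ => hτ2mem y, fun z => rfl⟩
      | none =>
        show (fun z => ∑' y, σ none y * τ2 y z) ∈ upClo {dirac (none : Option Z)}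
        rw [upClo_dirac_none]
        exact mixture_isDist (hσd none).1 (hσd none).2 hτ2d
    · rw [hξ z]
      have hswap := swap_sum (σ := σ) (c := fun _x y => τ2 y z) hμd.1 hμd.2.summable hσd
        (fun x y => (hτ2d y).1 z) (fun x y => dist_le_one (hτ2d y) z)
      calc ∑' y, μ' y * τ y z = ∑' y, μ' y * τ2 y z := by
            refine tsum_congr fun y => ?_
            by_cases hy : 0 < μ' y
            · simp [hτ2, hy]
            · have h0 : μ' y = 0 := le_antisymm (not_lt.1 hy) (hμ'0 y)
              simp [h0]
        _ = ∑' y, (∑' x, μ x * σ x y) * τ2 y z := by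
            refine tsum_congr fun y => ?_
            rw [← hμ'eq y]
        _ = ∑' y, ∑' x, μ x * σ x y * τ2 y z := by
            refine tsum_congr fun y => ?_
            exact (tsum_mul_right).symm
        _ = ∑' x, μ x * ∑' y, σ x y * τ2 y z := hswap.symm

end DOL
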